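/- If ‖·‖ is an L-norm on M_n(ℂ), then there exists α > 0 such that ‖A‖ = α‖A‖₁ for every normal matrix A ∈ M_n(ℂ), where ‖·‖₁ is the trace norm. -/

import Mathlib

open Matrix BigOperators ComplexOrder

/-- Square complex matrices. -/
abbrev Mat (n : ℕ) := Matrix (Fin n) (Fin n) ℂ

/-- `N` is a norm on `Mat n`. -/
def IsMatrixNorm {n : ℕ} (N : Mat n → ℝ) : Prop :=
  (∀ A, N A = 0 ↔ A = 0) ∧
  (∀ (c : ℂ) (A : Mat n), N (c • A) = ‖c‖ * N A) ∧
  (∀ A B : Mat n, N (A + B) ≤ N A + N B)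

/-- A set of matrices is C*-convex. -/
def CStarConvex {n : ℕ} (K : Set (Mat n)) : Prop :=
  ∀ (k : ℕ) (C A : Fin k → Mat n), (∀ i, A i ∈ K) →
    (∑ i, (C i)ᴴ * C i = 1) → (∑ i, (C i)ᴴ * A i * C i) ∈ K

/-- `N` is an M-norm. -/
def IsMNorm {n : ℕ} (N : Mat n → ℝ) : Prop :=
  ∀ (k : ℕ) (C X : Fin k → Mat n), (∑ i, (C i)ᴴ * C i = 1) →
    N (∑ i, (C i)ᴴ * X i * C i) ≤ ⨆ i, N (X i)

/-- `N` is an L-norm. -/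
def IsLNorm {n : ℕ} (N : Mat n → ℝ) : Prop :=
  ∀ (k : ℕ) (C : Fin k → Mat n) (X : Mat n), (∑ i, (C i)ᴴ * C i = 1) →
    ∑ i, N (C i * X * (C i)ᴴ) ≤ N X

/-- The dual norm with respect to the pairing `⟨Y|X⟩ = Tr(Yᴴ X)`. -/
noncomputable def dualNorm {n : ℕ} (N : Mat n → ℝ) (Y : Mat n) : ℝ :=
  sSup {r | ∃ X : Mat n, N X ≤ 1 ∧ r = ‖(Yᴴ * X).trace‖}

/-- The operator (spectral) norm of a matrix. -/
noncomputable def opNorm {n : ℕ} (A : Mat n) : ℝ :=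
  ‖Matrix.toEuclideanCLM (𝕜 := ℂ) (n := Fin n) A‖

/-- The trace norm `‖A‖₁ = Tr((AᴴA)^{1/2})`. -/
noncomputable def traceNorm {n : ℕ} (A : Mat n) : ℝ :=
  ((Matrix.posSemidef_conjTranspose_mul_self A).1.eigenvectorUnitary.1 *
    diagonal (fun i => ((√((Matrix.posSemidef_conjTranspose_mul_self A).1.eigenvalues i) : ℝ) : ℂ)) *
    (star (Matrix.posSemidef_conjTranspose_mul_self A).1.eigenvectorUnitary : Mat n)).trace.re

/-- The numerical radius. -/
noncomputable def numRadius {n : ℕ} (A : Mat n) : ℝ :=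
  sSup {r | ∃ x : EuclideanSpace ℂ (Fin n), ‖x‖ = 1 ∧
    r = ‖(inner ℂ x (Matrix.toEuclideanCLM (𝕜 := ℂ) (n := Fin n) A x))‖}

/-! ### Auxiliary lemmas -/

open Module.End in
private theorem aux_joint_eigenbasis {n : ℕ} {E : Type*} [NormedAddCommGroup E]
    [InnerProductSpace ℂ E] [FiniteDimensional ℂ E] {TH TK : E →ₗ[ℂ] E}
    (sH : TH.IsSymmetric) (sK : TK.IsSymmetric)
    (hComm : Commute TH TK) (hn : Module.finrank ℂ E = n) :
    ∃ b : OrthonormalBasis (Fin n) ℂ E, ∀ j, ∃ c d : ℂ,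
      TH (b j) = c • b j ∧ TK (b j) = d • b j := by
  classical
  set V : Module.End.Eigenvalues TH × Module.End.Eigenvalues TK → Submodule ℂ E :=
    fun p => eigenspace TH (p.1 : ℂ) ⊓ eigenspace TK (p.2 : ℂ) with hVdef
  have hOrth : OrthogonalFamily ℂ (fun p => (V p : Submodule ℂ E)) (fun p => (V p).subtypeₗᵢ) := by
    intro p q hpq
    refine (LinearMap.IsSymmetric.orthogonalFamily_eigenspace_inf_eigenspace sH sK)
      (i := ((p.2 : ℂ), (p.1 : ℂ))) (j := ((q.2 : ℂ), (q.1 : ℂ))) ?_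
    intro hcontra
    apply hpq
    obtain ⟨h2, h1⟩ := Prod.mk.injEq _ _ _ _ ▸ hcontra
    exact Prod.ext (Subtype.ext h1) (Subtype.ext h2)
  have hTop : ⨆ p, V p = ⊤ := by
    rw [← LinearMap.IsSymmetric.iSup_iSup_eigenspace_inf_eigenspace_eq_top_of_commute sH sK hComm]
    apply le_antisymm
    · exact iSup_le fun p => le_iSup_of_le (p.1 : ℂ) (le_iSup_of_le (p.2 : ℂ) le_rfl)
    · refine iSup_le fun α => iSup_le fun γ => ?_
      by_cases h : eigenspace TH α ⊓ eigenspace TK γ = ⊥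
      · rw [h]; exact bot_le
      · have hα : Module.End.HasEigenvalue TH α := fun hb : eigenspace TH α = ⊥ =>
          h (le_bot_iff.mp (hb ▸ (inf_le_left : eigenspace TH α ⊓ eigenspace TK γ ≤ _)))
        have hγ : Module.End.HasEigenvalue TK γ := fun hb : eigenspace TK γ = ⊥ =>
          h (le_bot_iff.mp (hb ▸ (inf_le_right : eigenspace TH α ⊓ eigenspace TK γ ≤ _)))
        exact le_iSup_of_le (⟨α, hα⟩, ⟨γ, hγ⟩) le_rfl
  have hInt : DirectSum.IsInternal V :=
    hOrth.isInternal_iff.mpr (by rw [hTop, Submodule.top_orthogonal_eq_bot])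
  refine ⟨hInt.subordinateOrthonormalBasis hn hOrth, fun j => ?_⟩
  set p := hInt.subordinateOrthonormalBasisIndex hn j hOrth with hpdef
  have hmem : hInt.subordinateOrthonormalBasis hn hOrth j ∈ V p :=
    hInt.subordinateOrthonormalBasis_subordinate hn j hOrth
  exact ⟨(p.1 : ℂ), (p.2 : ℂ), mem_eigenspace_iff.mp hmem.1, mem_eigenspace_iff.mp hmem.2⟩

private theorem aux_normal_eigenbasis {n : ℕ} (A : Mat n) (hA : Aᴴ * A = A * Aᴴ) :
    ∃ (b : OrthonormalBasis (Fin n) ℂ (EuclideanSpace ℂ (Fin n))) (μ : Fin n → ℂ),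
      ∀ j, A *ᵥ ⇑(b j) = μ j • ⇑(b j) := by
  classical
  set H : Mat n := (1/2 : ℂ) • (A + Aᴴ) with hHdef
  set K : Mat n := (Complex.I/2 : ℂ) • (Aᴴ - A) with hKdef
  have hH : H.IsHermitian := by
    simp [Matrix.IsHermitian, hHdef, conjTranspose_smul, add_comm, Complex.ext_iff]
  have hK : K.IsHermitian := by
    show Kᴴ = K
    rw [hKdef, conjTranspose_smul, conjTranspose_sub, conjTranspose_conjTranspose,
      show star (Complex.I/2 : ℂ) = -(Complex.I/2) from
        (by simp [Complex.ext_iff, Complex.div_im, Complex.div_re]; norm_num), neg_smul,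
      ← smul_neg, neg_sub]
  have hAHK : A = H + Complex.I • K := by
    rw [hHdef, hKdef]
    rw [smul_smul]
    rw [show Complex.I * (Complex.I/2) = -(1/2) by
      rw [mul_div_assoc', Complex.I_mul_I]; ring]
    module
  have hHK : H * K = K * H := by
    rw [hHdef, hKdef]
    simp only [Matrix.smul_mul, Matrix.mul_smul, add_mul, mul_add, sub_mul, mul_sub, hA]
    module
  set TH := Matrix.toEuclideanLin H with hTHdef
  set TK := Matrix.toEuclideanLin K with hTKdef
  have sH : TH.IsSymmetric := Matrix.isHermitian_iff_isSymmetric.mp hH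
  have sK : TK.IsSymmetric := Matrix.isHermitian_iff_isSymmetric.mp hK
  have hmul : ∀ M1 M2 : Mat n, Matrix.toEuclideanLin (M1 * M2)
      = Matrix.toEuclideanLin M1 ∘ₗ Matrix.toEuclideanLin M2 := by
    intro M1 M2
    simp only [Matrix.toEuclideanLin_eq_toLin, Matrix.toLin_mul _ (PiLp.basisFun 2 ℂ (Fin n)) _]
  have hComm : Commute TH TK := by
    show TH * TK = TK * TH
    have h1 := hmul H K
    have h2 := hmul K H
    rw [hHK, h2] at h1
    exact h1.symm
  obtain ⟨b, hb⟩ := aux_joint_eigenbasis sH sK hComm finrank_euclideanSpace_fin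
  choose c d hc hd using hb
  refine ⟨b, fun j => c j + Complex.I * d j, fun j => ?_⟩
  have hT : Matrix.toEuclideanLin A (b j) = (c j + Complex.I * d j) • b j := by
    rw [hAHK]
    have hsplit : Matrix.toEuclideanLin (H + Complex.I • K) = TH + Complex.I • TK := by
      rw [map_add]
      congr 1
      exact LinearEquiv.map_smul _ _ _
    rw [hsplit, LinearMap.add_apply, LinearMap.smul_apply, hc j, hd j, smul_smul, add_smul]
  simpa only [Matrix.toEuclideanLin_apply, WithLp.ofLp_smul] using congr(⇑$hT)

private theorem aux_diag_of_eigenbasis {n : ℕ} (A : Mat n)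
    (b : OrthonormalBasis (Fin n) ℂ (EuclideanSpace ℂ (Fin n)))
    (μ : Fin n → ℂ) (h : ∀ j, A *ᵥ ⇑(b j) = μ j • ⇑(b j)) :
    ∃ U : Mat n, U ∈ Matrix.unitaryGroup (Fin n) ℂ ∧ star U * A * U = Matrix.diagonal μ := by
  have hmem := (EuclideanSpace.basisFun (Fin n) ℂ).toMatrix_orthonormalBasis_mem_unitary b
  refine ⟨(EuclideanSpace.basisFun (Fin n) ℂ).toBasis.toMatrix b.toBasis, hmem, ?_⟩
  set U : Mat n := (EuclideanSpace.basisFun (Fin n) ℂ).toBasis.toMatrix b.toBasis with hUdef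
  have hU1 : star U * U = 1 := (Unitary.mem_iff.mp hmem).1
  have hUapp : ∀ i j, U i j = ⇑(b j) i := fun i j => rfl
  have hUmul : ∀ j, U *ᵥ Pi.single j 1 = ⇑(b j) := by
    intro j; funext i; simp [mulVec_single, hUapp]
  have hUstar : ∀ j, (star U) *ᵥ ⇑(b j) = Pi.single j 1 := by
    intro j; rw [← hUmul, mulVec_mulVec, hU1, one_mulVec]
  apply Matrix.toEuclideanLin.injective
  apply Module.Basis.ext (EuclideanSpace.basisFun (Fin n) ℂ).toBasis
  intro i
  simp only [toEuclideanLin_apply, OrthonormalBasis.coe_toBasis, EuclideanSpace.basisFun_apply,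
    EuclideanSpace.ofLp_single, ← mulVec_mulVec]
  rw [hUmul, h i, mulVec_smul, hUstar, Matrix.diagonal_mulVec_single]
  apply congrArg
  funext j
  simp [Pi.single_apply, mul_comm]

/-- Every normal matrix is unitarily diagonalizable. -/
private theorem aux_normal_spectral {n : ℕ} (A : Mat n) (hA : Aᴴ * A = A * Aᴴ) :
    ∃ U : Mat n, U ∈ Matrix.unitaryGroup (Fin n) ℂ ∧
      ∃ d : Fin n → ℂ, A = U * Matrix.diagonal d * star U := by
  obtain ⟨b, μ, hb⟩ := aux_normal_eigenbasis A hA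
  obtain ⟨U, hU, hdiag⟩ := aux_diag_of_eigenbasis A b μ hb
  obtain ⟨h1, h2⟩ := Unitary.mem_iff.mp hU
  refine ⟨U, hU, μ, ?_⟩
  rw [← hdiag]
  calc A = (U * star U) * A * (U * star U) := by rw [h2, Matrix.one_mul, Matrix.mul_one]
  _ = U * (star U * A * U) * star U := by noncomm_ring

private theorem aux_N_nonneg {n : ℕ} {N : Mat n → ℝ} (hN : IsMatrixNorm N) (X : Mat n) :
    0 ≤ N X := by
  obtain ⟨h0, hs, ht⟩ := hN
  have h1 : N (-X) = N X := by
    have := hs (-1) X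
    simpa using this
  have h2 := ht X (-X)
  rw [add_neg_cancel, (h0 0).mpr rfl, h1] at h2
  linarith

private theorem aux_N_sum_le {n : ℕ} {N : Mat n → ℝ} (hN : IsMatrixNorm N)
    {ι : Type*} (s : Finset ι) (f : ι → Mat n) :
    N (∑ i ∈ s, f i) ≤ ∑ i ∈ s, N (f i) := by
  classical
  induction s using Finset.induction_on with
  | empty => simp only [Finset.sum_empty]; exact ((hN.1 0).mpr rfl).le
  | @insert a s ha ih =>
    rw [Finset.sum_insert ha, Finset.sum_insert ha]
    exact le_trans (hN.2.2 _ _) (by linarith)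

private theorem aux_single_contraction {n : ℕ} {N : Mat n → ℝ} (hL : IsLNorm N)
    {C : Mat n} (hC : Cᴴ * C = 1) (X : Mat n) : N (C * X * Cᴴ) ≤ N X := by
  have := hL 1 (fun _ => C) X (by simpa using hC)
  simpa using this

private theorem aux_unitary_conj {n : ℕ} {N : Mat n → ℝ} (hL : IsLNorm N)
    {U : Mat n} (hU : U ∈ Matrix.unitaryGroup (Fin n) ℂ) (X : Mat n) :
    N (U * X * star U) = N X := by
  obtain ⟨h1, h2⟩ := Unitary.mem_iff.mp hU
  have hstar : (U : Mat n)ᴴ = star U := rfl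
  have le1 : N (U * X * star U) ≤ N X := by
    have := aux_single_contraction hL (C := U) (by rw [hstar]; exact h1) X
    rwa [hstar] at this
  have le2 : N X ≤ N (U * X * star U) := by
    have := aux_single_contraction hL (C := star U) (by
      show (star U)ᴴ * star U = 1
      rw [show (star U)ᴴ = U from by simp [Matrix.star_eq_conjTranspose]]
      exact h2) (U * X * star U)
    have heq : star U * (U * X * star U) * (star U)ᴴ = X := by
      rw [show (star U)ᴴ = U from by simp [Matrix.star_eq_conjTranspose]]
      calc star U * (U * X * star U) * U = (star U * U) * X * (star U * U) := by noncomm_ring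
      _ = X := by rw [h1, Matrix.one_mul, Matrix.mul_one]
    rwa [heq] at this
  exact le_antisymm le1 le2

private theorem aux_perm_star {n : ℕ} (σ : Equiv.Perm (Fin n)) :
    star (σ.permMatrix ℂ) = (σ⁻¹).permMatrix ℂ := by
  ext a b
  simp only [Matrix.star_eq_conjTranspose, conjTranspose_apply, Equiv.Perm.permMatrix,
    PEquiv.toMatrix_apply, Equiv.toPEquiv_apply, Option.mem_def, Option.some.injEq]
  by_cases h : σ b = a
  · rw [if_pos h, if_pos (by simp [← h])]
    simp
  · rw [if_neg h, if_neg (fun hc => h (by simp [← hc]))]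
    simp

private theorem aux_perm_unitary {n : ℕ} (σ : Equiv.Perm (Fin n)) :
    σ.permMatrix ℂ ∈ Matrix.unitaryGroup (Fin n) ℂ := by
  have key : ∀ τ : Equiv.Perm (Fin n), (τ.permMatrix ℂ) * ((τ⁻¹).permMatrix ℂ) = 1 := by
    intro τ
    rw [Equiv.Perm.permMatrix, Equiv.Perm.permMatrix, ← PEquiv.toMatrix_trans,
      ← Equiv.toPEquiv_trans]
    have htriv : τ.trans τ⁻¹ = Equiv.refl (Fin n) := by
      ext x; simp
    rw [htriv, Equiv.toPEquiv_refl, PEquiv.toMatrix_refl]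
  constructor
  · rw [aux_perm_star]
    have := key σ⁻¹
    rwa [inv_inv] at this
  · rw [aux_perm_star]
    exact key σ

private theorem aux_perm_conj_diagonal {n : ℕ} (σ : Equiv.Perm (Fin n)) (d : Fin n → ℂ) :
    (σ.permMatrix ℂ) * Matrix.diagonal d * star (σ.permMatrix ℂ)
      = Matrix.diagonal (fun i => d (σ i)) := by
  rw [aux_perm_star, Equiv.Perm.permMatrix, Equiv.Perm.permMatrix,
    PEquiv.toMatrix_toPEquiv_mul, PEquiv.mul_toMatrix_toPEquiv]
  ext a b
  simp only [Matrix.submatrix_apply, Matrix.diagonal_apply, id_eq]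
  simp only [show ((σ⁻¹ : Equiv.Perm (Fin n)).symm : Fin n → Fin n) = ⇑σ from rfl]
  by_cases h : a = b
  · simp [h]
  · rw [if_neg (fun hc => h (σ.injective hc)), if_neg h]

open scoped MatrixOrder in
private theorem aux_traceNorm_eq_sqrt {n : ℕ} (A : Mat n) :
    traceNorm A = (CFC.sqrt (Aᴴ * A)).trace.re := by
  have hP := Matrix.posSemidef_conjTranspose_mul_self A
  rw [CFC.sqrt_eq_real_sqrt _ hP.nonneg, cfcₙ_eq_cfc, hP.1.cfc_eq, IsHermitian.cfc,
    Unitary.conjStarAlgAut_apply, traceNorm]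
  rfl

open scoped MatrixOrder in
private theorem aux_traceNorm_conj_diag {n : ℕ} {U : Mat n}
    (hU : U ∈ Matrix.unitaryGroup (Fin n) ℂ) (d : Fin n → ℂ) :
    traceNorm (U * Matrix.diagonal d * star U) = ∑ i, ‖d i‖ := by
  obtain ⟨h1, h2⟩ := Unitary.mem_iff.mp hU
  set A : Mat n := U * Matrix.diagonal d * star U with hAdef
  set S : Mat n := U * Matrix.diagonal (fun i => (‖d i‖ : ℂ)) * star U with hSdef
  have hSpos : S.PosSemidef := by
    have hdpos : (Matrix.diagonal (fun i => (‖d i‖ : ℂ))).PosSemidef :=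
      Matrix.posSemidef_diagonal_iff.mpr fun i => by
        rw [Complex.zero_le_real]
        exact norm_nonneg _
    have := hdpos.mul_mul_conjTranspose_same U
    rwa [show Uᴴ = star U from rfl] at this
  have hAstar : Aᴴ = U * Matrix.diagonal (fun i => starRingEnd ℂ (d i)) * star U := by
    rw [hAdef]
    rw [Matrix.conjTranspose_mul, Matrix.conjTranspose_mul, Matrix.diagonal_conjTranspose]
    rw [show (star U)ᴴ = U from by simp [Matrix.star_eq_conjTranspose],
      show Uᴴ = star U from rfl]
    noncomm_ring
  have hdd : Matrix.diagonal (fun i => (‖d i‖ : ℂ)) *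
      Matrix.diagonal (fun i => (‖d i‖ : ℂ))
      = Matrix.diagonal (fun i => starRingEnd ℂ (d i)) * Matrix.diagonal d := by
    rw [Matrix.diagonal_mul_diagonal, Matrix.diagonal_mul_diagonal]
    have hfun : (fun i => (‖d i‖ : ℂ) * (‖d i‖ : ℂ))
        = fun i => starRingEnd ℂ (d i) * d i := by
      funext i
      rw [← Complex.ofReal_mul, Complex.norm_mul_self_eq_normSq, Complex.normSq_eq_conj_mul_self]
    rw [hfun]
  have hsq : S ^ 2 = Aᴴ * A := by
    rw [pow_two, hAstar, hAdef, hSdef]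
    calc (U * Matrix.diagonal (fun i => (‖d i‖ : ℂ)) * star U) *
          (U * Matrix.diagonal (fun i => (‖d i‖ : ℂ)) * star U)
        = U * (Matrix.diagonal (fun i => (‖d i‖ : ℂ)) * (star U * U) *
            Matrix.diagonal (fun i => (‖d i‖ : ℂ))) * star U := by noncomm_ring
      _ = U * (Matrix.diagonal (fun i => (‖d i‖ : ℂ)) *
            Matrix.diagonal (fun i => (‖d i‖ : ℂ))) * star U := by
          rw [h1, Matrix.mul_one]
      _ = U * (Matrix.diagonal (fun i => starRingEnd ℂ (d i)) * Matrix.diagonal d) * star U := by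
          rw [hdd]
      _ = (U * Matrix.diagonal (fun i => starRingEnd ℂ (d i)) * star U) *
            (U * Matrix.diagonal d * star U) := by
          calc U * (Matrix.diagonal (fun i => starRingEnd ℂ (d i)) * Matrix.diagonal d) * star U
              = U * (Matrix.diagonal (fun i => starRingEnd ℂ (d i)) * (star U * U) *
                Matrix.diagonal d) * star U := by rw [h1, Matrix.mul_one]
            _ = (U * Matrix.diagonal (fun i => starRingEnd ℂ (d i)) * star U) *
                (U * Matrix.diagonal d * star U) := by noncomm_ring
  have hsqrt : S = CFC.sqrt (Aᴴ * A) :=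
    (CFC.sqrt_unique (by rw [← pow_two]; exact hsq) (Matrix.nonneg_iff_posSemidef.mpr hSpos)).symm
  rw [aux_traceNorm_eq_sqrt, ← hsqrt, hSdef]
  rw [Matrix.trace_mul_cycle, h1, Matrix.one_mul, Matrix.trace_diagonal]
  rw [show ∑ i, ((‖d i‖ : ℂ)) = ((∑ i, ‖d i‖ : ℝ) : ℂ) by
    push_cast; ring]
  exact Complex.ofReal_re _

theorem LNorm_eq_traceNorm_on_normal {n : ℕ} (N : Mat n → ℝ)
    (hN : IsMatrixNorm N) (hL : IsLNorm N) :
    ∃ α : ℝ, 0 < α ∧ ∀ A : Mat n, Aᴴ * A = A * Aᴴ → N A = α * traceNorm A := by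
  classical
  rcases Nat.eq_zero_or_pos n with hn | hn
  · subst hn
    refine ⟨1, one_pos, fun A _ => ?_⟩
    have hA0 : A = 0 := by
      ext i j
      exact i.elim0
    have htr : traceNorm (0 : Mat 0) = 0 := by
      rw [traceNorm]
      simp [Matrix.trace]
    rw [hA0, (hN.1 0).mpr rfl, htr, mul_zero]
  · set i0 : Fin n := ⟨0, hn⟩
    set P : Fin n → Mat n := fun i => Matrix.diagonal (Pi.single i (1 : ℂ)) with hPdef
    set α : ℝ := N (P i0) with hαdef
    -- all the projections have the same norm
    have hPequal : ∀ i, N (P i) = α := by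
      intro i
      have hconj := aux_unitary_conj hL (aux_perm_unitary (Equiv.swap i i0)) (P i0)
      have hkey : (Equiv.swap i i0).permMatrix ℂ * P i0 * star ((Equiv.swap i i0).permMatrix ℂ)
          = P i := by
        simp only [hPdef]
        rw [aux_perm_conj_diagonal]
        have hfun : (fun k => (Pi.single i0 (1:ℂ) : Fin n → ℂ) ((Equiv.swap i i0) k))
            = (Pi.single i (1:ℂ) : Fin n → ℂ) := by
          funext k
          rw [Pi.single_apply, Pi.single_apply]
          by_cases hk : k = i
          · rw [if_pos (by rw [hk]; exact Equiv.swap_apply_left i i0), if_pos hk]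
          · rw [if_neg (fun hc => hk
              (Equiv.injective _ (hc.trans (Equiv.swap_apply_left i i0).symm))), if_neg hk]
        rw [hfun]
      rw [← hkey, hconj, hαdef]
    have hsingle_star : ∀ i : Fin n,
        star (Pi.single i (1:ℂ) : Fin n → ℂ) = (Pi.single i 1 : Fin n → ℂ) := by
      intro i
      funext k
      by_cases hk : k = i <;> simp [hk, Pi.single_apply]
    -- the key identity for diagonal matrices
    have hdiagN : ∀ d : Fin n → ℂ,
        N (Matrix.diagonal d) = ∑ i, ‖d i‖ * α := by
      intro d
      have hPP : ∀ i, (P i)ᴴ * P i = P i := by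
        intro i
        simp only [hPdef, Matrix.diagonal_conjTranspose, hsingle_star,
          Matrix.diagonal_mul_diagonal]
        exact congrArg Matrix.diagonal (funext fun k => by
          by_cases hk : k = i <;> simp [hk, Pi.single_apply])
      have hPsum : ∑ i, (P i)ᴴ * P i = 1 := by
        simp only [hPP]; simp only [hPdef]
        rw [show ∑ i : Fin n, Matrix.diagonal (Pi.single i (1:ℂ))
            = Matrix.diagonal (∑ i : Fin n, Pi.single i (1:ℂ)) from
          (map_sum (Matrix.diagonalAddMonoidHom (Fin n) ℂ) _ _).symm]
        rw [Finset.univ_sum_single]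
        exact Matrix.diagonal_one
      have hPdP : ∀ i, P i * Matrix.diagonal d * (P i)ᴴ = d i • P i := by
        intro i
        simp only [hPdef, Matrix.diagonal_conjTranspose, hsingle_star,
          Matrix.diagonal_mul_diagonal]
        rw [← Matrix.diagonal_smul]
        exact congrArg Matrix.diagonal (funext fun k => by
          by_cases hk : k = i <;> simp [hk, Pi.single_apply, mul_comm])
      have hlow : ∑ i, ‖d i‖ * α ≤ N (Matrix.diagonal d) := by
        have hle := hL n P (Matrix.diagonal d) hPsum
        calc ∑ i, ‖d i‖ * α = ∑ i, N (P i * Matrix.diagonal d * (P i)ᴴ) := by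
              refine Finset.sum_congr rfl fun i _ => ?_
              rw [hPdP i, hN.2.1, hPequal i]
          _ ≤ N (Matrix.diagonal d) := hle
      have hup : N (Matrix.diagonal d) ≤ ∑ i, ‖d i‖ * α := by
        have hdecomp : Matrix.diagonal d = ∑ i, d i • P i := by
          have : ∀ i : Fin n, d i • P i = Matrix.diagonal (Pi.single i (d i)) := by
            intro i
            simp only [hPdef]
            rw [← Matrix.diagonal_smul]
            exact congrArg Matrix.diagonal (funext fun k => by
              by_cases hk : k = i <;> simp [hk, Pi.single_apply])
          simp only [this]
          rw [show ∑ i : Fin n, Matrix.diagonal (Pi.single i (d i))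
              = Matrix.diagonal (∑ i : Fin n, Pi.single i (d i)) from
            (map_sum (Matrix.diagonalAddMonoidHom (Fin n) ℂ) _ _).symm]
          rw [Finset.univ_sum_single]
        calc N (Matrix.diagonal d) ≤ ∑ i, N (d i • P i) := by
              rw [hdecomp]; exact aux_N_sum_le hN _ _
          _ = ∑ i, ‖d i‖ * α := by
              refine Finset.sum_congr rfl fun i _ => ?_
              rw [hN.2.1, hPequal i]
      exact le_antisymm hup hlow
    refine ⟨α, ?_, fun A hA => ?_⟩
    · rcases (aux_N_nonneg hN (P i0)).lt_or_eq with h | h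
      · exact h
      · exfalso
        have hzero := (hN.1 (P i0)).mp h.symm
        have hentry := congrFun (congrFun hzero i0) i0
        simp only [hPdef, Matrix.diagonal_apply_eq, Pi.single_eq_same,
          Matrix.zero_apply] at hentry
        exact one_ne_zero hentry
    · obtain ⟨U, hU, d, hAd⟩ := aux_normal_spectral A hA
      have h1 : N A = N (Matrix.diagonal d) := by
        rw [hAd]; exact aux_unitary_conj hL hU _
      have h2 : traceNorm A = ∑ i, ‖d i‖ := by
        rw [hAd]; exact aux_traceNorm_conj_diag hU d
      rw [h1, hdiagN d, h2, ← Finset.sum_mul, mul_comm]
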